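/- Let M be an n×n matrix over RatFunc ℂ all of whose entries have intDegree ≤ 0, let B be a nonempty proper subset of Fin n with complement I, and let S(M) := (M - X • 1)⁻¹ + X • 1 be the spectral inverse of M. Then the submatrix [S(M)]_II - X • 1 is invertible, so the isospectral reduction R(S(M);B) exists, and every entry of the matrix R(S(M);B) - X • 1 has intDegree ≤ 0. -/

import Mathlib

set_option synthInstance.maxHeartbeats 1000000
set_option maxHeartbeats 1000000

open Matrix

/-- The isospectral reduction of `M` over `B`, with interior index set `I = Bᶜ`:
`R(M;B) = M_BB - M_BI (M_II - X•1)⁻¹ M_IB`. -/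
noncomputable def isoRed {α : Type} [Fintype α] [DecidableEq α]
    (M : Matrix α α (RatFunc ℂ)) (B : Finset α) : Matrix ↥B ↥B (RatFunc ℂ) :=
  M.submatrix (Subtype.val : ↥B → α) (Subtype.val : ↥B → α) -
    M.submatrix (Subtype.val : ↥B → α) (Subtype.val : ↥Bᶜ → α) *
      (M.submatrix (Subtype.val : ↥Bᶜ → α) (Subtype.val : ↥Bᶜ → α) -
        (RatFunc.X : RatFunc ℂ) • 1)⁻¹ *
      M.submatrix (Subtype.val : ↥Bᶜ → α) (Subtype.val : ↥B → α)

/-- The spectral inverse of a square matrix over `RatFunc ℂ`: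
`S(M) = (M - X•1)⁻¹ + X•1`. -/
noncomputable def specInv {α : Type} [Fintype α] [DecidableEq α]
    (M : Matrix α α (RatFunc ℂ)) : Matrix α α (RatFunc ℂ) :=
  (M - (RatFunc.X : RatFunc ℂ) • 1)⁻¹ + (RatFunc.X : RatFunc ℂ) • 1


open scoped Classical in
/-- Degree of a rational function as `WithBot ℤ`, with `Dg 0 = ⊥`. -/
noncomputable def Dg (w : RatFunc ℂ) : WithBot ℤ := if w = 0 then ⊥ else (w.intDegree : WithBot ℤ)

lemma Dg_zero : Dg 0 = ⊥ := by unfold Dg; simp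

lemma Dg_of_ne {w : RatFunc ℂ} (h : w ≠ 0) : Dg w = (w.intDegree : WithBot ℤ) := by unfold Dg; simp [h]

lemma Dg_eq_bot {w : RatFunc ℂ} : Dg w = ⊥ ↔ w = 0 := by
  unfold Dg; split <;> simp_all

lemma Dg_neg (x : RatFunc ℂ) : Dg (-x) = Dg x := by
  by_cases hx : x = 0
  · simp [hx]
  · rw [Dg_of_ne (neg_ne_zero.mpr hx), Dg_of_ne hx, RatFunc.intDegree_neg]

lemma Dg_one : Dg 1 = (0 : ℤ) := by
  rw [Dg_of_ne one_ne_zero, RatFunc.intDegree_one]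

lemma Dg_X : Dg RatFunc.X = (1 : ℤ) := by
  rw [Dg_of_ne RatFunc.X_ne_zero, RatFunc.intDegree_X]

lemma Dg_mul (x y : RatFunc ℂ) : Dg (x * y) = Dg x + Dg y := by
  by_cases hx : x = 0
  · simp [hx, Dg_zero]
  by_cases hy : y = 0
  · simp [hy, Dg_zero]
  rw [Dg_of_ne (mul_ne_zero hx hy), Dg_of_ne hx, Dg_of_ne hy,
    RatFunc.intDegree_mul hx hy]
  exact_mod_cast rfl

lemma Dg_add_le (x y : RatFunc ℂ) : Dg (x + y) ≤ max (Dg x) (Dg y) := by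
  by_cases hxy : x + y = 0
  · simp [hxy, Dg_zero]
  by_cases hx : x = 0
  · simp [hx]
  by_cases hy : y = 0
  · simp [hy]
  rw [Dg_of_ne hxy, Dg_of_ne hx, Dg_of_ne hy]
  have := RatFunc.intDegree_add_le hy hxy
  exact_mod_cast this

lemma Dg_add_eq_right {x y : RatFunc ℂ} (h : Dg x < Dg y) : Dg (x + y) = Dg y := by
  refine le_antisymm ((Dg_add_le x y).trans (max_le h.le le_rfl)) ?_
  by_contra hlt
  push_neg at hlt
  have : Dg y ≤ max (Dg (x + y)) (Dg (-x)) := by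
    have := Dg_add_le (x + y) (-x)
    simpa using this
  rw [Dg_neg] at this
  rcases max_cases (Dg (x + y)) (Dg x) with ⟨he, _⟩ | ⟨he, _⟩ <;> rw [he] at this
  · exact absurd this (not_le.mpr hlt)
  · exact absurd this (not_le.mpr h)

lemma Dg_sum_le {ι : Type*} (s : Finset ι) (f : ι → RatFunc ℂ) (c : WithBot ℤ)
    (h : ∀ i ∈ s, Dg (f i) ≤ c) : Dg (∑ i ∈ s, f i) ≤ c := by
  classical
  induction s using Finset.induction_on with
  | empty => simp [Dg_zero]
  | @insert a s' hne ih =>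
    rw [Finset.sum_insert hne]
    refine (Dg_add_le _ _).trans (max_le (h a (by simp)) (ih fun i hi => h i (by simp [hi])))

lemma Dg_prod_le {ι : Type*} (s : Finset ι) (f : ι → RatFunc ℂ) (b : ι → ℤ)
    (h : ∀ i ∈ s, Dg (f i) ≤ (b i : WithBot ℤ)) :
    Dg (∏ i ∈ s, f i) ≤ ((∑ i ∈ s, b i : ℤ) : WithBot ℤ) := by
  classical
  induction s using Finset.induction_on with
  | empty => simp [Dg_one]
  | @insert a s' hne ih =>
    rw [Finset.prod_insert hne, Finset.sum_insert hne, Dg_mul, WithBot.coe_add]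
    exact add_le_add (h a (by simp)) (ih fun i hi => h i (by simp [hi]))

lemma Dg_prod_eq {ι : Type*} (s : Finset ι) (f : ι → RatFunc ℂ)
    (h : ∀ i ∈ s, Dg (f i) = (1 : ℤ)) :
    Dg (∏ i ∈ s, f i) = ((s.card : ℤ) : WithBot ℤ) := by
  classical
  induction s using Finset.induction_on with
  | empty => simp [Dg_one]
  | @insert a s' hne ih =>
    rw [Finset.prod_insert hne, Dg_mul, h a (by simp), ih fun i hi => h i (by simp [hi]),
      Finset.card_insert_of_notMem hne]
    push_cast
    exact add_comm _ _

lemma Dg_inv {x : RatFunc ℂ} (hx : x ≠ 0) : Dg x⁻¹ = ((-x.intDegree : ℤ) : WithBot ℤ) := by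
  have h1 : Dg (x * x⁻¹) = (0 : ℤ) := by rw [mul_inv_cancel₀ hx]; exact Dg_one
  rw [Dg_mul, Dg_of_ne hx, Dg_of_ne (inv_ne_zero hx)] at h1
  rw [Dg_of_ne (inv_ne_zero hx)]
  have : x.intDegree + x⁻¹.intDegree = 0 := by exact_mod_cast h1
  have h2 : x⁻¹.intDegree = -x.intDegree := by omega
  exact_mod_cast h2

lemma Dg_le_zero {w : RatFunc ℂ} (h : w.intDegree ≤ 0) : Dg w ≤ (0 : ℤ) := by
  by_cases hw : w = 0
  · simp [hw, Dg_zero]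
  · rw [Dg_of_ne hw]; exact_mod_cast h

lemma intDegree_le_zero_of_Dg {w : RatFunc ℂ} (h : Dg w ≤ (0 : ℤ)) : w.intDegree ≤ 0 := by
  by_cases hw : w = 0
  · simp [hw, RatFunc.intDegree_zero]
  · rw [Dg_of_ne hw] at h; exact_mod_cast h

lemma Dg_zsmul_unit (ε : ℤˣ) (x : RatFunc ℂ) : Dg ((ε : ℤ) • x) = Dg x := by
  rcases Int.units_eq_one_or ε with h | h <;> rw [h] <;> simp [Dg_neg]

namespace SpecAux

open Matrix Equiv

variable {α : Type} [Fintype α] [DecidableEq α]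

lemma term_le (A : Matrix α α (RatFunc ℂ))
    (hA : ∀ i j, Dg (A i j) ≤ ((if i = j then 1 else 0 : ℤ) : WithBot ℤ))
    (σ : Equiv.Perm α) (hσ : σ ≠ 1) :
    Dg (∏ i, A (σ i) i) ≤ ((Fintype.card α - 2 : ℤ) : WithBot ℤ) := by
  have h1 : Dg (∏ i, A (σ i) i) ≤
      ((∑ i, if σ i = i then (1:ℤ) else 0 : ℤ) : WithBot ℤ) :=
    Dg_prod_le _ _ _ (fun i _ => by simpa using hA (σ i) i)
  refine h1.trans (WithBot.coe_le_coe.mpr ?_)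
  have h2 : (∑ i, if σ i = i then (1:ℤ) else 0) =
      ((Finset.univ.filter (fun i => σ i = i)).card : ℤ) := by
    rw [Finset.sum_ite, Finset.sum_const, Finset.sum_const]
    simp
  have h3 : (Finset.univ.filter (fun i => σ i = i)).card +
      (Finset.univ.filter (fun i => ¬ σ i = i)).card = Fintype.card α :=
    Finset.card_filter_add_card_filter_not _
  have h4 : (Finset.univ.filter (fun i => ¬ σ i = i)) = σ.support := by
    ext x; simp [Equiv.Perm.mem_support]
  have h5 : 1 < σ.support.card := Equiv.Perm.one_lt_card_support_of_ne_one hσ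
  rw [h4] at h3
  rw [h2]
  omega

lemma Dg_smul_sign (σ : Equiv.Perm α) (x : RatFunc ℂ) :
    Dg (Equiv.Perm.sign σ • x) = Dg x := by
  rw [Units.smul_def]
  exact Dg_zsmul_unit _ x

lemma Dg_det (A : Matrix α α (RatFunc ℂ))
    (hA : ∀ i j, Dg (A i j) ≤ ((if i = j then 1 else 0 : ℤ) : WithBot ℤ))
    (hdiag : ∀ i, Dg (A i i) = ((1 : ℤ) : WithBot ℤ)) :
    Dg A.det = ((Fintype.card α : ℤ) : WithBot ℤ) := by
  rw [Matrix.det_apply,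
    ← Finset.add_sum_erase Finset.univ _ (Finset.mem_univ (1 : Equiv.Perm α))]
  have hdt : Dg (Equiv.Perm.sign (1 : Equiv.Perm α) • ∏ i, A ((1 : Equiv.Perm α) i) i)
      = ((Fintype.card α : ℤ) : WithBot ℤ) := by
    rw [Dg_smul_sign]
    exact Dg_prod_eq Finset.univ (fun i => A i i) (fun i _ => hdiag i)
  have hrest : Dg (∑ σ ∈ Finset.univ.erase (1 : Equiv.Perm α),
      Equiv.Perm.sign σ • ∏ i, A (σ i) i) ≤ ((Fintype.card α - 2 : ℤ) : WithBot ℤ) := by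
    refine Dg_sum_le _ _ _ fun σ hσ => ?_
    rw [Dg_smul_sign]
    exact term_le A hA σ (Finset.ne_of_mem_erase hσ)
  rw [add_comm, Dg_add_eq_right, hdt]
  rw [hdt]
  refine lt_of_le_of_lt hrest (WithBot.coe_lt_coe.mpr ?_)
  omega

lemma Dg_adj (A : Matrix α α (RatFunc ℂ))
    (hA : ∀ i j, Dg (A i j) ≤ ((if i = j then 1 else 0 : ℤ) : WithBot ℤ)) (i j : α) :
    Dg (A.adjugate i j) ≤ ((Fintype.card α - 1 : ℤ) : WithBot ℤ) := by
  rw [Matrix.adjugate_apply, Matrix.det_apply]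
  refine Dg_sum_le _ _ _ fun σ _ => ?_
  rw [Dg_smul_sign]
  have hb : ∀ k ∈ Finset.univ, Dg ((A.updateRow j (Pi.single i 1)) (σ k) k) ≤
      (((if σ k = j then 0 else 1 : ℤ)) : WithBot ℤ) := by
    intro k _
    by_cases h : σ k = j
    · rw [h, if_pos rfl, Matrix.updateRow_self, Pi.single_apply]
      by_cases hk : k = i
      · simp [hk, Dg_one]
      · simp [hk, Dg_zero]
    · rw [Matrix.updateRow_ne h, if_neg h]
      refine (hA (σ k) k).trans (WithBot.coe_le_coe.mpr ?_)
      split <;> omega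
  refine (Dg_prod_le _ _ _ hb).trans (WithBot.coe_le_coe.mpr ?_)
  have h1 : (∑ k, if σ k = j then (0:ℤ) else 1) = (∑ m, if m = j then (0:ℤ) else 1) :=
    Fintype.sum_equiv σ _ _ (fun k => rfl)
  have h2 : (∑ m, if m = j then (0:ℤ) else 1) = Fintype.card α - 1 := by
    rw [Finset.sum_ite, Finset.sum_const, Finset.sum_const]
    have : (Finset.univ.filter (fun m => m = j)).card = 1 := by
      rw [Finset.filter_eq']
      simp
    have h3 : (Finset.univ.filter (fun m => m = j)).card +
        (Finset.univ.filter (fun m => ¬ m = j)).card = Fintype.card α :=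
      Finset.card_filter_add_card_filter_not _
    rw [smul_zero, zero_add, nsmul_eq_mul, mul_one]
    omega
  rw [h1, h2]

/-- Core lemma: for `N` with entries of nonpositive degree, `N - X•1` is invertible
and the entries of its inverse have degree at most `-1`. -/
lemma inv_entries (N : Matrix α α (RatFunc ℂ)) (h : ∀ i j, (N i j).intDegree ≤ 0) :
    IsUnit (N - (RatFunc.X : RatFunc ℂ) • 1).det ∧
      ∀ i j, Dg ((N - (RatFunc.X : RatFunc ℂ) • 1)⁻¹ i j) ≤ ((-1 : ℤ) : WithBot ℤ) := by
  set A := N - (RatFunc.X : RatFunc ℂ) • 1 with hAdef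
  have hentry : ∀ i j, A i j = N i j - if i = j then RatFunc.X else 0 := by
    intro i j
    simp [hAdef, Matrix.sub_apply, Matrix.smul_apply, Matrix.one_apply, mul_ite]
  have hdiag : ∀ i, Dg (A i i) = ((1 : ℤ) : WithBot ℤ) := by
    intro i
    rw [hentry i i, if_pos rfl, sub_eq_add_neg, Dg_add_eq_right, Dg_neg, Dg_X]
    rw [Dg_neg, Dg_X]
    exact lt_of_le_of_lt (Dg_le_zero (h i i)) (by exact_mod_cast WithBot.coe_lt_coe.mpr one_pos)
  have hbound : ∀ i j, Dg (A i j) ≤ ((if i = j then 1 else 0 : ℤ) : WithBot ℤ) := by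
    intro i j
    by_cases hij : i = j
    · rw [if_pos hij, hij, hdiag j]
    · rw [hentry i j, if_neg hij, sub_zero, if_neg hij]
      exact Dg_le_zero (h i j)
  have hdet : Dg A.det = ((Fintype.card α : ℤ) : WithBot ℤ) := Dg_det A hbound hdiag
  have hdet0 : A.det ≠ 0 := by
    intro h0
    rw [h0, Dg_zero] at hdet
    exact WithBot.bot_ne_coe hdet
  refine ⟨isUnit_iff_ne_zero.mpr hdet0, fun i j => ?_⟩
  have hinv : A⁻¹ = A.det⁻¹ • A.adjugate := by
    rw [Matrix.inv_def, Ring.inverse_eq_inv]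
  have hdeg_det : A.det.intDegree = Fintype.card α := by
    rw [Dg_of_ne hdet0] at hdet
    exact_mod_cast hdet
  have hdinv : Dg A.det⁻¹ = ((-(Fintype.card α : ℤ) : ℤ) : WithBot ℤ) := by
    rw [Dg_inv hdet0, hdeg_det]
  have : Dg (A⁻¹ i j) = Dg A.det⁻¹ + Dg (A.adjugate i j) := by
    rw [hinv, Matrix.smul_apply, smul_eq_mul, Dg_mul]
  rw [this, hdinv]
  calc ((-(Fintype.card α : ℤ) : ℤ) : WithBot ℤ) + Dg (A.adjugate i j)
      ≤ ((-(Fintype.card α : ℤ) : ℤ) : WithBot ℤ) + ((Fintype.card α - 1 : ℤ) : WithBot ℤ) :=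
        add_le_add le_rfl (Dg_adj A hbound i j)
    _ = ((-1 : ℤ) : WithBot ℤ) := by
        rw [← WithBot.coe_add]
        congr 1
        ring

end SpecAux

namespace SpecAux

variable {m : Type} [Fintype m] [DecidableEq m]

lemma mul_submatrix_split {β γ : Type*} (A P : Matrix m m (RatFunc ℂ)) (B : Finset m)
    (f : β → m) (g : γ → m) :
    (A * P).submatrix f g =
      A.submatrix f (Subtype.val : ↥B → m) * P.submatrix (Subtype.val : ↥B → m) g +
      A.submatrix f (Subtype.val : ↥Bᶜ → m) * P.submatrix (Subtype.val : ↥Bᶜ → m) g := by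
  ext i j
  simp only [Matrix.submatrix_apply, Matrix.mul_apply, Matrix.add_apply]
  rw [Finset.sum_coe_sort B (fun k => A (f i) k * P k (g j)),
    Finset.sum_coe_sort Bᶜ (fun k => A (f i) k * P k (g j)),
    Finset.sum_add_sum_compl B (fun k => A (f i) k * P k (g j))]

lemma submatrix_one_BI (B : Finset m) :
    (1 : Matrix m m (RatFunc ℂ)).submatrix (Subtype.val : ↥B → m) (Subtype.val : ↥Bᶜ → m)
      = 0 := by
  ext i j
  have hij : (i : m) ≠ (j : m) := by
    intro h
    exact (Finset.mem_compl.mp j.2) (h ▸ i.2)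
  simp [Matrix.one_apply, hij]

lemma submatrix_one_IB (B : Finset m) :
    (1 : Matrix m m (RatFunc ℂ)).submatrix (Subtype.val : ↥Bᶜ → m) (Subtype.val : ↥B → m)
      = 0 := by
  ext i j
  have hij : (i : m) ≠ (j : m) := by
    intro h
    exact (Finset.mem_compl.mp i.2) (h ▸ j.2)
  simp [Matrix.one_apply, hij]

end SpecAux


theorem isoRed_specInv_exists_and_intDegree_le_zero {n : ℕ}
    (M : Matrix (Fin n) (Fin n) (RatFunc ℂ))
    (hdeg : ∀ i j, (M i j).intDegree ≤ 0)
    (B : Finset (Fin n)) (hB : B.Nonempty) (hBproper : B ≠ Finset.univ) :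
    IsUnit ((specInv M).submatrix (Subtype.val : ↥Bᶜ → Fin n) (Subtype.val : ↥Bᶜ → Fin n) -
      (RatFunc.X : RatFunc ℂ) • 1) ∧
    ∀ i j, ((isoRed (specInv M) B - (RatFunc.X : RatFunc ℂ) • 1) i j).intDegree ≤ 0 := by
  classical
  obtain ⟨hAdet, hAinv⟩ := SpecAux.inv_entries M hdeg
  set vB := (Subtype.val : ↥B → Fin n) with hvB
  set vI := (Subtype.val : ↥Bᶜ → Fin n) with hvI
  set A := M - (RatFunc.X : RatFunc ℂ) • 1 with hAdef
  set P := A⁻¹ with hPdef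
  have hAP : A * P = 1 := Matrix.mul_nonsing_inv _ hAdet
  have hPA : P * A = 1 := Matrix.nonsing_inv_mul _ hAdet
  -- the interior blocks
  set A11 := A.submatrix vB vB with hA11
  set A12 := A.submatrix vB vI with hA12
  set A21 := A.submatrix vI vB with hA21
  set A22 := A.submatrix vI vI with hA22
  set P11 := P.submatrix vB vB with hP11
  set P12 := P.submatrix vB vI with hP12d
  set P21 := P.submatrix vI vB with hP21d
  set P22 := P.submatrix vI vI with hP22d
  -- A11 is of the same shape: M_BB - X•1
  have hA11eq : A11 = M.submatrix vB vB - (RatFunc.X : RatFunc ℂ) • 1 := by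
    ext i j
    simp only [hA11, hAdef, Matrix.submatrix_apply, Matrix.sub_apply, Matrix.smul_apply,
      Matrix.one_apply, Subtype.ext_iff, smul_eq_mul, hvB]
  obtain ⟨hQdet, hQinv⟩ := SpecAux.inv_entries (M.submatrix vB vB) (fun i j => hdeg _ _)
  set Q := (M.submatrix vB vB - (RatFunc.X : RatFunc ℂ) • 1)⁻¹ with hQdef
  have hQ1 : A11 * Q = 1 := by rw [hA11eq]; exact Matrix.mul_nonsing_inv _ hQdet
  have hQ2 : Q * A11 = 1 := by rw [hA11eq]; exact Matrix.nonsing_inv_mul _ hQdet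
  -- block equations
  have hsub1BB : (1 : Matrix (Fin n) (Fin n) (RatFunc ℂ)).submatrix vB vB = 1 :=
    Matrix.submatrix_one vB Subtype.val_injective
  have hsub1II : (1 : Matrix (Fin n) (Fin n) (RatFunc ℂ)).submatrix vI vI = 1 :=
    Matrix.submatrix_one vI Subtype.val_injective
  have hE1 : A11 * P11 + A12 * P21 = 1 := by
    have h := congrArg (fun Z : Matrix (Fin n) (Fin n) (RatFunc ℂ) => Z.submatrix vB vB) hAP
    simpa [SpecAux.mul_submatrix_split A P B vB vB, hsub1BB] using h
  have hE2 : A11 * P12 + A12 * P22 = 0 := by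
    have h := congrArg (fun Z : Matrix (Fin n) (Fin n) (RatFunc ℂ) => Z.submatrix vB vI) hAP
    simpa [SpecAux.mul_submatrix_split A P B vB vI, show (1 : Matrix (Fin n) (Fin n) (RatFunc ℂ)).submatrix vB vI = 0 from SpecAux.submatrix_one_BI B] using h
  have hE4 : A21 * P12 + A22 * P22 = 1 := by
    have h := congrArg (fun Z : Matrix (Fin n) (Fin n) (RatFunc ℂ) => Z.submatrix vI vI) hAP
    simpa [SpecAux.mul_submatrix_split A P B vI vI, hsub1II] using h
  have hF3 : P21 * A11 + P22 * A21 = 0 := by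
    have h := congrArg (fun Z : Matrix (Fin n) (Fin n) (RatFunc ℂ) => Z.submatrix vI vB) hPA
    simpa [SpecAux.mul_submatrix_split P A B vI vB, show (1 : Matrix (Fin n) (Fin n) (RatFunc ℂ)).submatrix vI vB = 0 from SpecAux.submatrix_one_IB B] using h
  have hF4 : P21 * A12 + P22 * A22 = 1 := by
    have h := congrArg (fun Z : Matrix (Fin n) (Fin n) (RatFunc ℂ) => Z.submatrix vI vI) hPA
    simpa [SpecAux.mul_submatrix_split P A B vI vI, hsub1II] using h
  -- consequences
  have hP12 : P12 = -(Q * (A12 * P22)) := by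
    have h1 : A11 * P12 = -(A12 * P22) := by
      rw [eq_neg_iff_add_eq_zero]; exact hE2
    calc P12 = (Q * A11) * P12 := by rw [hQ2, Matrix.one_mul]
    _ = Q * (A11 * P12) := by rw [Matrix.mul_assoc]
    _ = Q * (-(A12 * P22)) := by rw [h1]
    _ = -(Q * (A12 * P22)) := by rw [Matrix.mul_neg]
  have hP21 : P21 = -((P22 * A21) * Q) := by
    have h1 : P21 * A11 = -(P22 * A21) := by
      rw [eq_neg_iff_add_eq_zero]; exact hF3
    calc P21 = P21 * (A11 * Q) := by rw [hQ1, Matrix.mul_one]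
    _ = (P21 * A11) * Q := by rw [Matrix.mul_assoc]
    _ = -((P22 * A21) * Q) := by rw [h1, Matrix.neg_mul]
  set Sch := A22 - A21 * (Q * A12) with hSch
  have hP22S : P22 * Sch = 1 := by
    have h1 : P22 * (A21 * (Q * A12)) = -P21 * A12 := by
      rw [hP21]
      simp only [Matrix.neg_mul, neg_neg, Matrix.mul_assoc]
    rw [hSch, Matrix.mul_sub, h1, Matrix.neg_mul, sub_neg_eq_add, add_comm]
    exact hF4
  have hSP22 : Sch * P22 = 1 := by
    have h1 : (A21 * (Q * A12)) * P22 = A21 * -P12 := by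
      rw [hP12]
      simp only [Matrix.mul_neg, neg_neg, Matrix.mul_assoc]
    rw [hSch, Matrix.sub_mul, h1, Matrix.mul_neg, sub_neg_eq_add, add_comm]
    exact hE4
  -- S and its blocks
  have hS : specInv M = P + (RatFunc.X : RatFunc ℂ) • 1 := rfl
  have hSII : (specInv M).submatrix vI vI - (RatFunc.X : RatFunc ℂ) • 1 = P22 := by
    ext i j
    rw [hS]
    simp only [Matrix.submatrix_apply, Matrix.add_apply, Matrix.sub_apply, Matrix.smul_apply,
      Matrix.one_apply, Subtype.ext_iff, hP22d, hvI]
    abel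
  have hSBB : (specInv M).submatrix vB vB = P11 + (RatFunc.X : RatFunc ℂ) • 1 := by
    ext i j
    rw [hS]
    simp only [Matrix.submatrix_apply, Matrix.add_apply, Matrix.smul_apply,
      Matrix.one_apply, Subtype.ext_iff, hP11, hvB]
  have hSBI : (specInv M).submatrix vB vI = P12 := by
    ext i j
    have hij : (i : Fin n) ≠ (j : Fin n) := by
      intro h
      exact (Finset.mem_compl.mp j.2) (h ▸ i.2)
    simp [hS, Matrix.submatrix_apply, Matrix.add_apply, Matrix.smul_apply,
      Matrix.one_apply, hij, hP12d, hvB, hvI]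
  have hSIB : (specInv M).submatrix vI vB = P21 := by
    ext i j
    have hij : (i : Fin n) ≠ (j : Fin n) := by
      intro h
      exact (Finset.mem_compl.mp i.2) (h ▸ j.2)
    simp [hS, Matrix.submatrix_apply, Matrix.add_apply, Matrix.smul_apply,
      Matrix.one_apply, hij, hP21d, hvB, hvI]
  have hP22unit : IsUnit P22 := ⟨⟨P22, Sch, hP22S, hSP22⟩, rfl⟩
  refine ⟨hSII ▸ hP22unit, ?_⟩
  have hinv2 : ((specInv M).submatrix vI vI - (RatFunc.X : RatFunc ℂ) • 1)⁻¹ = Sch := by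
    rw [hSII]; exact Matrix.inv_eq_right_inv hP22S
  have hred : isoRed (specInv M) B - (RatFunc.X : RatFunc ℂ) • 1 = Q := by
    unfold isoRed
    rw [show ((specInv M).submatrix (Subtype.val : ↥B → Fin n) (Subtype.val : ↥B → Fin n)) =
      (specInv M).submatrix vB vB from rfl]
    rw [hSBB, hSBI, hSIB, hinv2]
    have h1 : P12 * Sch * P21 = -(Q * (A12 * P21)) := by
      rw [hP12]
      simp only [Matrix.neg_mul, Matrix.mul_assoc]
      rw [← Matrix.mul_assoc P22 Sch P21, hP22S, Matrix.one_mul]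
    have h2 : P11 + Q * (A12 * P21) = Q := by
      have h3 : Q * (A11 * P11 + A12 * P21) = Q := by rw [hE1, Matrix.mul_one]
      rw [Matrix.mul_add, ← Matrix.mul_assoc, hQ2, Matrix.one_mul] at h3
      exact h3
    rw [h1, sub_neg_eq_add]
    conv_rhs => rw [← h2]
    abel
  intro i j
  rw [hred]
  refine intDegree_le_zero_of_Dg ((hQinv i j).trans ?_)
  exact WithBot.coe_le_coe.mpr (by decide)
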